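/- Let T > 0, let α, β, d_f, d_b be nonnegative real constants, let p : ℝ → ℝ be Lipschitz continuous with constant L, and let R₀, R₁ > 0. Let c₁, c₂ : [0,T] → ℝ be continuous with 0 ≤ cᵢ(t) ≤ R₁, and for i = 1,2 let (r_{f,i}, r_{b,i}) be continuously differentiable solutions on [0,T] of r_{f,i}' = p(r_{b,i}) − α cᵢ r_{f,i} + β r_{b,i} − d_f r_{f,i}, r_{b,i}' = α cᵢ r_{f,i} − β r_{b,i} − d_b r_{b,i}, with the same nonnegative initial data r_{f,1}(0) = r_{f,2}(0) and r_{b,1}(0) = r_{b,2}(0), and with 0 ≤ r_{f,i}(t), r_{b,i}(t) ≤ R₀ on [0,T]. Then there is a constant μ, depending only on α, β, d_f, d_b, L, R₀, R₁ and T, such that |r_{f,1}(t) − r_{f,2}(t)|² + |r_{b,1}(t) − r_{b,2}(t)|² ≤ μ ∫₀ᵗ |c₁(s) − c₂(s)|² ds for all t ∈ [0,T]. -/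

import Mathlib

open Set

/-- The receptor ODE system of the signalling model on the time interval `[0, T]`:
`r_f` (free receptors) and `r_b` (bound receptors) are continuously differentiable on `[0,T]`,
satisfy the two ODEs there, and take the prescribed initial values. -/
def IsReceptorSolution (T : ℝ) (c : ℝ → ℝ) (α β d_f d_b : ℝ) (p : ℝ → ℝ)
    (rf0 rb0 : ℝ) (rf rb : ℝ → ℝ) : Prop :=
  ContDiffOn ℝ 1 rf (Icc 0 T) ∧ ContDiffOn ℝ 1 rb (Icc 0 T) ∧
  (∀ t ∈ Icc 0 T,
    HasDerivWithinAt rf (p (rb t) - α * c t * rf t + β * rb t - d_f * rf t) (Icc 0 T) t) ∧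
  (∀ t ∈ Icc 0 T,
    HasDerivWithinAt rb (α * c t * rf t - β * rb t - d_b * rb t) (Icc 0 T) t) ∧
  rf 0 = rf0 ∧ rb 0 = rb0


set_option maxHeartbeats 1000000 in
lemma key_ineq (α β d_f d_b L R₀ R₁ A c₁ c₂ f₁ f₂ b₁ b₂ D : ℝ)
    (hα : 0 ≤ α) (hβ : 0 ≤ β) (hdf : 0 ≤ d_f) (hdb : 0 ≤ d_b) (hL : 0 ≤ L)
    (hA : A = L + α * R₁ + α * R₀ + β + d_f + d_b + 1)
    (hc₁0 : 0 ≤ c₁) (hc₁1 : c₁ ≤ R₁) (hf₂0 : 0 ≤ f₂) (hf₂1 : f₂ ≤ R₀)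
    (hD : |D| ≤ L * |b₁ - b₂|) :
    2 * (f₁ - f₂) * (D - α * (c₁ * f₁ - c₂ * f₂) + β * (b₁ - b₂) - d_f * (f₁ - f₂))
      + 2 * (b₁ - b₂) * (α * (c₁ * f₁ - c₂ * f₂) - β * (b₁ - b₂) - d_b * (b₁ - b₂))
    ≤ 6 * A * ((f₁ - f₂) ^ 2 + (b₁ - b₂) ^ 2) + 2 * A * (c₁ - c₂) ^ 2 := by
  set u := f₁ - f₂ with hu
  set v := b₁ - b₂ with hv
  set w := c₁ - c₂ with hw
  have hR0 : 0 ≤ R₀ := hf₂0.trans hf₂1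
  have hR1 : 0 ≤ R₁ := hc₁0.trans hc₁1
  have h1 : 2 * u * D ≤ L * (u ^ 2 + v ^ 2) := by
    have a1 : u * D ≤ |u| * |D| := (le_abs_self _).trans_eq (abs_mul u D)
    have a2 : |u| * |D| ≤ |u| * (L * |v|) :=
      mul_le_mul_of_nonneg_left hD (abs_nonneg u)
    have a3 : 2 * (L * (|u| * |v|)) ≤ L * (|u| ^ 2 + |v| ^ 2) := by
      nlinarith [mul_nonneg hL (sq_nonneg (|u| - |v|))]
    calc 2 * u * D ≤ 2 * (|u| * (L * |v|)) := by linarith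
      _ = 2 * (L * (|u| * |v|)) := by ring
      _ ≤ L * (|u| ^ 2 + |v| ^ 2) := a3
      _ = L * (u ^ 2 + v ^ 2) := by rw [sq_abs, sq_abs]
  have h3 : -(2 * u * (α * (w * f₂))) ≤ α * R₀ * (w ^ 2 + u ^ 2) := by
    nlinarith [mul_nonneg (mul_nonneg hα hf₂0) (sq_nonneg (w + u)),
      mul_nonneg (mul_nonneg hα (sub_nonneg.2 hf₂1))
        (add_nonneg (sq_nonneg w) (sq_nonneg u))]
  have h6 : 2 * v * (α * (w * f₂)) ≤ α * R₀ * (w ^ 2 + v ^ 2) := by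
    nlinarith [mul_nonneg (mul_nonneg hα hf₂0) (sq_nonneg (w - v)),
      mul_nonneg (mul_nonneg hα (sub_nonneg.2 hf₂1))
        (add_nonneg (sq_nonneg w) (sq_nonneg v))]
  have h4 : 2 * β * (u * v) ≤ β * (u ^ 2 + v ^ 2) := by
    nlinarith [mul_nonneg hβ (sq_nonneg (u - v))]
  have h5 : 2 * (α * c₁) * (u * v) ≤ α * R₁ * (u ^ 2 + v ^ 2) := by
    nlinarith [mul_nonneg (mul_nonneg hα hc₁0) (sq_nonneg (u - v)),
      mul_nonneg (mul_nonneg hα (sub_nonneg.2 hc₁1))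
        (add_nonneg (sq_nonneg u) (sq_nonneg v))]
  have h2 : 0 ≤ α * c₁ * u ^ 2 := by positivity
  have h7 : 0 ≤ d_f * u ^ 2 := by positivity
  have h8 : 0 ≤ (β + d_b) * v ^ 2 := by positivity
  have hαR1 : 0 ≤ α * R₁ := mul_nonneg hα hR1
  have hαR0 : 0 ≤ α * R₀ := mul_nonneg hα hR0
  have lhs_eq :
      2 * u * (D - α * (c₁ * u + w * f₂) + β * v - d_f * u)
        + 2 * v * (α * (c₁ * u + w * f₂) - β * v - d_b * v)
      = 2 * u * D - 2 * (α * c₁ * u ^ 2) - (2 * u * (α * (w * f₂)))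
        + 2 * β * (u * v) - 2 * (d_f * u ^ 2) + 2 * (α * c₁) * (u * v)
        + 2 * v * (α * (w * f₂)) - 2 * (β * v ^ 2) - 2 * (d_b * v ^ 2) := by ring
  have hkey : c₁ * f₁ - c₂ * f₂ = c₁ * u + w * f₂ := by rw [hu, hw]; ring
  rw [hkey, lhs_eq]
  have m1 : 0 ≤ (6 * A - (L + α * R₀ + β + α * R₁)) * u ^ 2 :=
    mul_nonneg (by linarith) (sq_nonneg u)
  have m2 : 0 ≤ (6 * A - (L + α * R₀ + β + α * R₁)) * v ^ 2 :=
    mul_nonneg (by linarith) (sq_nonneg v)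
  have m3 : 0 ≤ (2 * A - 2 * (α * R₀)) * w ^ 2 :=
    mul_nonneg (by linarith) (sq_nonneg w)
  linarith [h1, h3, h6, h4, h5, h2, h7, h8, m1, m2, m3]


set_option maxHeartbeats 2000000 in
/-- Gronwall-type continuous-dependence estimate of the receptor densities on the
ligand concentration `c`: the constant `μ` depends only on `α, β, d_f, d_b, L, R₀, R₁, T`. -/
theorem stmt_3 (T α β d_f d_b L R₀ R₁ : ℝ) (hT : 0 < T)
    (hα : 0 ≤ α) (hβ : 0 ≤ β) (hdf : 0 ≤ d_f) (hdb : 0 ≤ d_b)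
    (hL : 0 ≤ L) (hR₀ : 0 < R₀) (hR₁ : 0 < R₁) :
    ∃ μ : ℝ, ∀ p : ℝ → ℝ, LipschitzWith L.toNNReal p →
      ∀ c₁ c₂ : ℝ → ℝ, ContinuousOn c₁ (Icc 0 T) → ContinuousOn c₂ (Icc 0 T) →
        (∀ t ∈ Icc 0 T, 0 ≤ c₁ t ∧ c₁ t ≤ R₁) →
        (∀ t ∈ Icc 0 T, 0 ≤ c₂ t ∧ c₂ t ≤ R₁) →
        ∀ rf₁ rb₁ rf₂ rb₂ : ℝ → ℝ,
          IsReceptorSolution T c₁ α β d_f d_b p (rf₁ 0) (rb₁ 0) rf₁ rb₁ →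
          IsReceptorSolution T c₂ α β d_f d_b p (rf₂ 0) (rb₂ 0) rf₂ rb₂ →
          rf₁ 0 = rf₂ 0 → rb₁ 0 = rb₂ 0 → 0 ≤ rf₁ 0 → 0 ≤ rb₁ 0 →
          (∀ t ∈ Icc 0 T, 0 ≤ rf₁ t ∧ rf₁ t ≤ R₀) →
          (∀ t ∈ Icc 0 T, 0 ≤ rb₁ t ∧ rb₁ t ≤ R₀) →
          (∀ t ∈ Icc 0 T, 0 ≤ rf₂ t ∧ rf₂ t ≤ R₀) →
          (∀ t ∈ Icc 0 T, 0 ≤ rb₂ t ∧ rb₂ t ≤ R₀) →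
          ∀ t ∈ Icc 0 T,
            |rf₁ t - rf₂ t| ^ 2 + |rb₁ t - rb₂ t| ^ 2 ≤
              μ * ∫ s in (0:ℝ)..t, |c₁ s - c₂ s| ^ 2 := by
  set A : ℝ := L + α * R₁ + α * R₀ + β + d_f + d_b + 1 with hA
  have hA0 : (0:ℝ) ≤ A := by
    have := mul_nonneg hα hR₁.le
    have := mul_nonneg hα hR₀.le
    rw [hA]; linarith
  refine ⟨2 * A * Real.exp (6 * A * T), ?_⟩
  intro p hp c₁ c₂ hc₁ hc₂ hc₁b hc₂b rf₁ rb₁ rf₂ rb₂ hsol₁ hsol₂ hrf0 hrb0 _ _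
    hrf₁b hrb₁b hrf₂b hrb₂b t ht
  obtain ⟨_, _, hrf₁', hrb₁', _, _⟩ := hsol₁
  obtain ⟨_, _, hrf₂', hrb₂', _, _⟩ := hsol₂
  -- Lipschitz bound
  have hlip : ∀ x y : ℝ, |p x - p y| ≤ L * |x - y| := by
    intro x y
    have := hp.dist_le_mul x y
    rwa [Real.dist_eq, Real.dist_eq, Real.coe_toNNReal L hL] at this
  -- continuous extension of |c₁ - c₂|²
  have hproj : Continuous fun s : ℝ => ((projIcc (0:ℝ) T hT.le s : ℝ)) :=
    continuous_subtype_val.comp continuous_projIcc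
  have hmemproj : ∀ s : ℝ, ((projIcc (0:ℝ) T hT.le s : ℝ)) ∈ Icc (0:ℝ) T :=
    fun s => (projIcc (0:ℝ) T hT.le s).2
  set g : ℝ → ℝ :=
    fun s => |c₁ ((projIcc (0:ℝ) T hT.le s : ℝ)) - c₂ ((projIcc (0:ℝ) T hT.le s : ℝ))| ^ 2
    with hgdef
  have hc₁g : Continuous fun s : ℝ => c₁ ((projIcc (0:ℝ) T hT.le s : ℝ)) :=
    hc₁.comp_continuous hproj hmemproj
  have hc₂g : Continuous fun s : ℝ => c₂ ((projIcc (0:ℝ) T hT.le s : ℝ)) :=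
    hc₂.comp_continuous hproj hmemproj
  have hg : Continuous g := ((hc₁g.sub hc₂g).abs).pow 2
  have hgeq : ∀ s ∈ Icc (0:ℝ) T, g s = |c₁ s - c₂ s| ^ 2 := by
    intro s hs
    simp [hgdef, projIcc_of_mem hT.le hs]
  have hgnonneg : ∀ s, 0 ≤ g s := fun s => by positivity
  -- energy
  set E : ℝ → ℝ := fun s => (rf₁ s - rf₂ s) ^ 2 + (rb₁ s - rb₂ s) ^ 2 with hEdef
  set Ed : ℝ → ℝ := fun s =>
    2 * (rf₁ s - rf₂ s) *
      ((p (rb₁ s) - p (rb₂ s)) - α * (c₁ s * rf₁ s - c₂ s * rf₂ s)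
        + β * (rb₁ s - rb₂ s) - d_f * (rf₁ s - rf₂ s))
    + 2 * (rb₁ s - rb₂ s) *
      (α * (c₁ s * rf₁ s - c₂ s * rf₂ s) - β * (rb₁ s - rb₂ s)
        - d_b * (rb₁ s - rb₂ s)) with hEddef
  have hE : ∀ s ∈ Icc (0:ℝ) T, HasDerivWithinAt E (Ed s) (Icc 0 T) s := by
    intro s hs
    have h1 := ((hrf₁' s hs).sub (hrf₂' s hs)).pow 2
    have h2 := ((hrb₁' s hs).sub (hrb₂' s hs)).pow 2
    have h := h1.add h2
    refine h.congr_deriv ?_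
    simp only [hEddef, Pi.sub_apply]
    push_cast
    ring
  -- φ
  set φ : ℝ → ℝ := fun s => Real.exp (-(6 * A) * s) * g s with hφdef
  have hφ : Continuous φ := (Real.continuous_exp.comp (continuous_const.mul continuous_id)).mul hg
  have hφnonneg : ∀ s, 0 ≤ φ s := fun s => mul_nonneg (Real.exp_nonneg _) (hgnonneg s)
  -- H and its derivative
  set H : ℝ → ℝ :=
    fun s => Real.exp (-(6 * A) * s) * E s - 2 * A * ∫ x in (0:ℝ)..s, φ x with hHdef
  set Hd : ℝ → ℝ := fun s =>
    (Real.exp (-(6 * A) * s) * (-(6 * A))) * E s + Real.exp (-(6 * A) * s) * Ed s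
      - 2 * A * φ s with hHddef
  have hHderiv : ∀ s ∈ Icc (0:ℝ) T, HasDerivWithinAt H (Hd s) (Icc 0 T) s := by
    intro s hs
    have hexp : HasDerivAt (fun x : ℝ => Real.exp (-(6 * A) * x))
        (Real.exp (-(6 * A) * s) * (-(6 * A))) s := by
      have := ((hasDerivAt_id s).const_mul (-(6 * A))).exp
      simpa using this
    have hint : HasDerivAt (fun x : ℝ => ∫ y in (0:ℝ)..x, φ y) (φ s) s :=
      intervalIntegral.integral_hasDerivAt_right (hφ.intervalIntegrable _ _)
        (hφ.stronglyMeasurableAtFilter _ _) hφ.continuousAt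
    have h := (hexp.hasDerivWithinAt.mul (hE s hs)).sub
      ((hint.hasDerivWithinAt).const_mul (2 * A))
    exact h
  -- derivative nonpositive
  have hHd_nonpos : ∀ s ∈ Icc (0:ℝ) T, Hd s ≤ 0 := by
    intro s hs
    have hDbound : |p (rb₁ s) - p (rb₂ s)| ≤ L * |rb₁ s - rb₂ s| := hlip _ _
    have key := key_ineq α β d_f d_b L R₀ R₁ A (c₁ s) (c₂ s) (rf₁ s) (rf₂ s)
      (rb₁ s) (rb₂ s) (p (rb₁ s) - p (rb₂ s)) hα hβ hdf hdb hL hA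
      (hc₁b s hs).1 (hc₁b s hs).2 (hrf₂b s hs).1 (hrf₂b s hs).2 hDbound
    have hEdle : Ed s ≤ 6 * A * E s + 2 * A * (c₁ s - c₂ s) ^ 2 := key
    have hgs : g s = (c₁ s - c₂ s) ^ 2 := by rw [hgeq s hs, sq_abs]
    have hepos : (0:ℝ) < Real.exp (-(6 * A) * s) := Real.exp_pos _
    have : Hd s = Real.exp (-(6 * A) * s) *
        (Ed s - 6 * A * E s - 2 * A * (c₁ s - c₂ s) ^ 2) := by
      rw [hHddef, hφdef]
      simp only
      rw [hgs]
      ring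
    rw [this]
    exact mul_nonpos_of_nonneg_of_nonpos hepos.le (by linarith)
  -- H is antitone on Icc
  have hHcont : ContinuousOn H (Icc 0 T) := fun s hs => (hHderiv s hs).continuousWithinAt
  have hHanti : AntitoneOn H (Icc 0 T) := by
    apply antitoneOn_of_hasDerivWithinAt_nonpos (convex_Icc 0 T) hHcont
      (f' := Hd)
    · intro x hx
      exact ((hHderiv x (interior_subset hx)).mono interior_subset)
    · intro x hx
      exact hHd_nonpos x (interior_subset hx)
  have h0mem : (0:ℝ) ∈ Icc (0:ℝ) T := ⟨le_refl _, hT.le⟩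
  have hHt : H t ≤ H 0 := hHanti h0mem ht ht.1
  have hH0 : H 0 = 0 := by
    rw [hHdef]
    simp only
    rw [intervalIntegral.integral_same]
    have hE0 : E 0 = 0 := by rw [hEdef]; simp [hrf0, hrb0]
    rw [hE0]
    ring
  rw [hH0] at hHt
  -- from H t ≤ 0 : exp(-6At) E t ≤ 2A ∫ φ
  have hmain : Real.exp (-(6 * A) * t) * E t ≤ 2 * A * ∫ x in (0:ℝ)..t, φ x := by
    rw [hHdef] at hHt
    simp only at hHt
    linarith
  -- ∫ φ ≤ ∫ g on [0,t]
  have hexple : ∀ x ∈ Icc (0:ℝ) t, φ x ≤ g x := by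
    intro x hx
    have h1 : Real.exp (-(6 * A) * x) ≤ 1 := by
      rw [Real.exp_le_one_iff]
      nlinarith [hx.1]
    calc φ x = Real.exp (-(6 * A) * x) * g x := rfl
      _ ≤ 1 * g x := mul_le_mul_of_nonneg_right h1 (hgnonneg x)
      _ = g x := one_mul _
  have hintle : (∫ x in (0:ℝ)..t, φ x) ≤ ∫ x in (0:ℝ)..t, g x :=
    intervalIntegral.integral_mono_on ht.1 (hφ.intervalIntegrable _ _)
      (hg.intervalIntegrable _ _) hexple
  have hginteq : (∫ x in (0:ℝ)..t, g x) = ∫ s in (0:ℝ)..t, |c₁ s - c₂ s| ^ 2 := by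
    apply intervalIntegral.integral_congr
    intro s hs
    rw [uIcc_of_le ht.1] at hs
    exact hgeq s ⟨hs.1, hs.2.trans ht.2⟩
  have hgint_nonneg : 0 ≤ ∫ x in (0:ℝ)..t, g x :=
    intervalIntegral.integral_nonneg ht.1 (fun x _ => hgnonneg x)
  -- multiply hmain by exp(6At)
  have hEt : E t ≤ Real.exp (6 * A * t) * (2 * A * ∫ x in (0:ℝ)..t, φ x) := by
    have h := mul_le_mul_of_nonneg_left hmain (Real.exp_nonneg (6 * A * t))
    have e1 : Real.exp (6 * A * t) * (Real.exp (-(6 * A) * t) * E t) = E t := by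
      rw [← mul_assoc, ← Real.exp_add]
      have : 6 * A * t + -(6 * A) * t = 0 := by ring
      rw [this, Real.exp_zero, one_mul]
    rwa [e1] at h
  have hφint_nonneg : 0 ≤ ∫ x in (0:ℝ)..t, φ x :=
    intervalIntegral.integral_nonneg ht.1 (fun x _ => hφnonneg x)
  have hexpT : Real.exp (6 * A * t) ≤ Real.exp (6 * A * T) := by
    apply Real.exp_le_exp.2
    nlinarith [ht.2]
  have final : E t ≤ 2 * A * Real.exp (6 * A * T) * ∫ x in (0:ℝ)..t, g x := by
    calc E t ≤ Real.exp (6 * A * t) * (2 * A * ∫ x in (0:ℝ)..t, φ x) := hEt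
      _ ≤ Real.exp (6 * A * t) * (2 * A * ∫ x in (0:ℝ)..t, g x) := by
          apply mul_le_mul_of_nonneg_left _ (Real.exp_nonneg _)
          exact mul_le_mul_of_nonneg_left hintle (by linarith)
      _ ≤ Real.exp (6 * A * T) * (2 * A * ∫ x in (0:ℝ)..t, g x) := by
          apply mul_le_mul_of_nonneg_right hexpT
          exact mul_nonneg (by linarith) hgint_nonneg
      _ = 2 * A * Real.exp (6 * A * T) * ∫ x in (0:ℝ)..t, g x := by ring
  have hfin : |rf₁ t - rf₂ t| ^ 2 + |rb₁ t - rb₂ t| ^ 2 = E t := by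
    rw [hEdef]; simp [sq_abs]
  rw [hfin, ← hginteq]
  exact final
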